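/- Let M ∈ ℂ with M ≠ 0 and y ∈ ℂ, set P = [[M, 1], [0, M⁻¹]], Q = [[M, 0], [2−y, M⁻¹]], and x = M + M⁻¹. Then for every integer m, the trace of (QP⁻¹)^m (QP) (Q⁻¹P)^m equals 2 − (y+2−x²)·(S_m(y) − S_{m−1}(y))². -/

import Mathlib

open Polynomial

/-- Integer-indexed Chebyshev-like polynomials: `S 0 = 1`, `S 1 = X`,
and `S (l+1) = X * S l - S (l-1)` for all `l : ℤ`
(equivalently `S l = U_l (v/2)` for the Chebyshev polynomials `U` of the second kind). -/
@[semireducible] noncomputable def chebS (R : Type*) [CommRing R] : ℤ → R[X]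
  | 0 => 1
  | 1 => X
  | (n : ℕ) + 2 => X * chebS R (n + 1) - chebS R n
  | -((n : ℕ) + 1) => X * chebS R (-n) - chebS R (-n + 1)
  termination_by n => Int.natAbs n + Int.natAbs (n - 1)

lemma chebS_zero (R : Type*) [CommRing R] : chebS R 0 = 1 := chebS.eq_1 R

lemma chebS_one (R : Type*) [CommRing R] : chebS R 1 = X := chebS.eq_2 R

lemma chebS_neg_one (R : Type*) [CommRing R] : chebS R (-1) = 0 := by
  have h := chebS.eq_4 R 0
  rw [show (Int.negSucc 0) = -1 by decide, show (-((0:ℕ):ℤ) + 1) = 1 by norm_num,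
    show (-((0:ℕ):ℤ)) = 0 by norm_num, chebS_zero, chebS_one] at h
  rw [h]; ring

lemma chebS_neg_two (R : Type*) [CommRing R] : chebS R (-2) = -1 := by
  have h := chebS.eq_4 R 1
  rw [show (Int.negSucc 1) = -2 by decide, show (-((1:ℕ):ℤ) + 1) = 0 by norm_num,
    show (-((1:ℕ):ℤ)) = -1 by norm_num, chebS_neg_one, chebS_zero] at h
  rw [h]; ring

lemma chebS_rec (R : Type*) [CommRing R] (m : ℤ) :
    chebS R (m + 1) = X * chebS R m - chebS R (m - 1) := by
  obtain ⟨n⟩ | ⟨n⟩ := m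
  · cases n with
    | zero =>
      rw [show (Int.ofNat 0 - 1 : ℤ) = -1 by decide, show (Int.ofNat 0 + 1 : ℤ) = 1 by decide,
        show (Int.ofNat 0 : ℤ) = 0 by decide, chebS_neg_one, chebS_zero, chebS_one]
      ring
    | succ k =>
      have h := chebS.eq_3 R k
      have e : (Int.ofNat (Nat.succ (Nat.succ k)) : ℤ) = ((k:ℤ) + 1) + 1 := by
        simp only [Int.ofNat_eq_coe]; push_cast; ring
      rw [e] at h
      have e2 : (Int.ofNat (k+1) : ℤ) = (k:ℤ) + 1 := by
        simp only [Int.ofNat_eq_coe]; push_cast; ring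
      rw [e2, h, show ((k:ℤ) + 1) - 1 = (k:ℤ) by ring]
  · have h := chebS.eq_4 R (n+1)
    have e2 : ((n+1:ℕ):ℤ) = (n:ℤ) + 1 := by push_cast; ring
    rw [Int.negSucc_eq, e2] at h
    rw [Int.negSucc_eq]
    rw [show (-((n:ℤ)+1) - 1) = -(((n:ℤ)+1)+1) by ring, h]
    ring

lemma chebS_eval_rec (y : ℂ) (j : ℤ) :
    (chebS ℂ (j + 1)).eval y = y * (chebS ℂ j).eval y - (chebS ℂ (j - 1)).eval y := by
  rw [chebS_rec]; simp

lemma chebS_pell (y : ℂ) (k : ℤ) :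
    (chebS ℂ k).eval y ^ 2 - y * (chebS ℂ k).eval y * (chebS ℂ (k-1)).eval y
      + (chebS ℂ (k-1)).eval y ^ 2 = 1 := by
  induction k using Int.induction_on with
  | zero =>
    rw [show (0:ℤ) - 1 = -1 by ring, chebS_neg_one, chebS_zero]; simp
  | succ k ih =>
    rw [show ((k:ℤ) + 1) - 1 = (k:ℤ) by ring]
    have h1 := chebS_eval_rec y (k:ℤ)
    linear_combination ih + ((chebS ℂ ((k:ℤ)+1)).eval y - (chebS ℂ ((k:ℤ)-1)).eval y) * h1
  | pred k ih =>
    rw [show (-(k:ℤ) - 1) - 1 = -(k:ℤ) - 2 by ring]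
    have h1 := chebS_eval_rec y (-(k:ℤ) - 1)
    rw [show (-(k:ℤ) - 1 + 1) = -(k:ℤ) by ring, show (-(k:ℤ) - 1 - 1) = -(k:ℤ) - 2 by ring] at h1
    rw [show (-(k:ℤ)) - 1 = -(k:ℤ) - 1 by ring] at ih
    linear_combination ih - ((chebS ℂ (-(k:ℤ))).eval y - (chebS ℂ (-(k:ℤ)-2)).eval y) * h1

lemma sl2_zpow (y : ℂ) (A : Matrix (Fin 2) (Fin 2) ℂ) (hdet : IsUnit A.det)
    (hCH : A * A = y • A - 1) (m : ℤ) :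
    A ^ m = (chebS ℂ (m-1)).eval y • A - (chebS ℂ (m-2)).eval y • 1 := by
  have hinv : A⁻¹ = y • (1 : Matrix (Fin 2) (Fin 2) ℂ) - A := by
    apply Matrix.inv_eq_right_inv
    rw [mul_sub, mul_smul_comm, mul_one, hCH]
    abel
  induction m using Int.induction_on with
  | zero =>
    rw [show (0:ℤ) - 1 = -1 by ring, show (0:ℤ) - 2 = -2 by ring,
      chebS_neg_one, chebS_neg_two]
    simp
  | succ k ih =>
    rw [Matrix.zpow_add_one hdet, ih]
    have h1 := chebS_eval_rec y ((k:ℤ) - 1)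
    rw [show ((k:ℤ) - 1 + 1) = (k:ℤ) by ring, show ((k:ℤ) - 1 - 1) = (k:ℤ) - 2 by ring] at h1
    rw [show ((k:ℤ)+1) - 1 = (k:ℤ) by ring, show ((k:ℤ)+1) - 2 = (k:ℤ) - 1 by ring, h1]
    rw [sub_mul]
    simp only [smul_mul_assoc, one_mul]
    rw [hCH]
    module
  | pred k ih =>
    rw [Matrix.zpow_sub_one hdet, ih, hinv]
    have h1 := chebS_eval_rec y (-(k:ℤ) - 2)
    rw [show (-(k:ℤ) - 2 + 1) = -(k:ℤ) - 1 by ring,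
      show (-(k:ℤ) - 2 - 1) = -(k:ℤ) - 3 by ring] at h1
    rw [show (-(k:ℤ) - 1) - 1 = -(k:ℤ) - 2 by ring,
      show (-(k:ℤ) - 1) - 2 = -(k:ℤ) - 3 by ring,
      show (-(k:ℤ)) - 1 = -(k:ℤ) - 1 by ring,
      show (-(k:ℤ)) - 2 = -(k:ℤ) - 2 by ring]
    rw [sub_mul, mul_sub, mul_sub]
    simp only [smul_mul_assoc, mul_smul_comm, mul_one, one_mul]
    rw [hCH, h1]
    module

/-- For `P = [[M,1],[0,M⁻¹]]`, `Q = [[M,0],[2-y,M⁻¹]]`, `x = M + M⁻¹` and every integer `m`,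
`tr ((QP⁻¹)^m (QP) (Q⁻¹P)^m) = 2 - (y+2-x²)·(S_m(y) - S_{m-1}(y))²`. -/
theorem odd_word_trace (M y : ℂ) (hM : M ≠ 0) (m : ℤ) :
    Matrix.trace ((!![M, 0; 2 - y, M⁻¹] * (!![M, 1; 0, M⁻¹])⁻¹) ^ m
        * (!![M, 0; 2 - y, M⁻¹] * !![M, 1; 0, M⁻¹])
        * ((!![M, 0; 2 - y, M⁻¹])⁻¹ * !![M, 1; 0, M⁻¹]) ^ m)
      = 2 - (y + 2 - (M + M⁻¹)^2)
            * ((chebS ℂ m).eval y - (chebS ℂ (m - 1)).eval y) ^ 2 := by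
  have hMi : M * M⁻¹ = 1 := mul_inv_cancel₀ hM
  have hPinv : (!![M, 1; 0, M⁻¹])⁻¹ = !![M⁻¹, -1; 0, M] := by
    apply Matrix.inv_eq_right_inv
    rw [Matrix.one_fin_two]
    ext i j
    fin_cases i <;> fin_cases j
    all_goals try simp only [Matrix.mul_apply, Matrix.smul_apply, Matrix.sub_apply,
      Fin.sum_univ_two, Matrix.cons_val', Matrix.cons_val_zero, Matrix.cons_val_one,
      Matrix.head_cons, Matrix.head_fin_const, Matrix.cons_val_fin_one, Matrix.empty_val',
      smul_eq_mul, Fin.isValue, Fin.zero_eta, Fin.mk_one, Matrix.of_apply]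
    all_goals try field_simp
    all_goals try ring
  have hQinv : (!![M, 0; 2 - y, M⁻¹])⁻¹ = !![M⁻¹, 0; y - 2, M] := by
    apply Matrix.inv_eq_right_inv
    rw [Matrix.one_fin_two]
    ext i j
    fin_cases i <;> fin_cases j
    all_goals try simp only [Matrix.mul_apply, Matrix.smul_apply, Matrix.sub_apply,
      Fin.sum_univ_two, Matrix.cons_val', Matrix.cons_val_zero, Matrix.cons_val_one,
      Matrix.head_cons, Matrix.head_fin_const, Matrix.cons_val_fin_one, Matrix.empty_val',
      smul_eq_mul, Fin.isValue, Fin.zero_eta, Fin.mk_one, Matrix.of_apply]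
    all_goals try field_simp
    all_goals try ring
  have hA : !![M, 0; 2 - y, M⁻¹] * !![M⁻¹, -1; 0, M]
      = !![1, -M; (2 - y) * M⁻¹, y - 1] := by
    ext i j
    fin_cases i <;> fin_cases j
    all_goals try simp only [Matrix.mul_apply, Matrix.smul_apply, Matrix.sub_apply,
      Fin.sum_univ_two, Matrix.cons_val', Matrix.cons_val_zero, Matrix.cons_val_one,
      Matrix.head_cons, Matrix.head_fin_const, Matrix.cons_val_fin_one, Matrix.empty_val',
      smul_eq_mul, Fin.isValue, Fin.zero_eta, Fin.mk_one, Matrix.of_apply]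
    all_goals try field_simp
    all_goals try ring
  have hB : !![M⁻¹, 0; y - 2, M] * !![M, 1; 0, M⁻¹]
      = !![1, M⁻¹; (y - 2) * M, y - 1] := by
    ext i j
    fin_cases i <;> fin_cases j
    all_goals try simp only [Matrix.mul_apply, Matrix.smul_apply, Matrix.sub_apply,
      Fin.sum_univ_two, Matrix.cons_val', Matrix.cons_val_zero, Matrix.cons_val_one,
      Matrix.head_cons, Matrix.head_fin_const, Matrix.cons_val_fin_one, Matrix.empty_val',
      smul_eq_mul, Fin.isValue, Fin.zero_eta, Fin.mk_one, Matrix.of_apply]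
    all_goals try field_simp
    all_goals try ring
  have hdetA : IsUnit (!![1, -M; (2 - y) * M⁻¹, y - 1] : Matrix (Fin 2) (Fin 2) ℂ).det := by
    rw [Matrix.det_fin_two_of]
    have : (1 : ℂ) * (y - 1) - -M * ((2 - y) * M⁻¹) = 1 := by
      field_simp; ring
    rw [this]; exact isUnit_one
  have hdetB : IsUnit (!![1, M⁻¹; (y - 2) * M, y - 1] : Matrix (Fin 2) (Fin 2) ℂ).det := by
    rw [Matrix.det_fin_two_of]
    have : (1 : ℂ) * (y - 1) - M⁻¹ * ((y - 2) * M) = 1 := by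
      field_simp; ring
    rw [this]; exact isUnit_one
  have hCHA : (!![1, -M; (2 - y) * M⁻¹, y - 1] : Matrix (Fin 2) (Fin 2) ℂ)
      * !![1, -M; (2 - y) * M⁻¹, y - 1]
      = y • !![1, -M; (2 - y) * M⁻¹, y - 1] - 1 := by
    rw [Matrix.one_fin_two]
    ext i j
    fin_cases i <;> fin_cases j
    all_goals try simp only [Matrix.mul_apply, Matrix.smul_apply, Matrix.sub_apply,
      Fin.sum_univ_two, Matrix.cons_val', Matrix.cons_val_zero, Matrix.cons_val_one,
      Matrix.head_cons, Matrix.head_fin_const, Matrix.cons_val_fin_one, Matrix.empty_val',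
      smul_eq_mul, Fin.isValue, Fin.zero_eta, Fin.mk_one, Matrix.of_apply]
    all_goals try field_simp
    all_goals try ring
  have hCHB : (!![1, M⁻¹; (y - 2) * M, y - 1] : Matrix (Fin 2) (Fin 2) ℂ)
      * !![1, M⁻¹; (y - 2) * M, y - 1]
      = y • !![1, M⁻¹; (y - 2) * M, y - 1] - 1 := by
    rw [Matrix.one_fin_two]
    ext i j
    fin_cases i <;> fin_cases j
    all_goals try simp only [Matrix.mul_apply, Matrix.smul_apply, Matrix.sub_apply,
      Fin.sum_univ_two, Matrix.cons_val', Matrix.cons_val_zero, Matrix.cons_val_one,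
      Matrix.head_cons, Matrix.head_fin_const, Matrix.cons_val_fin_one, Matrix.empty_val',
      smul_eq_mul, Fin.isValue, Fin.zero_eta, Fin.mk_one, Matrix.of_apply]
    all_goals try field_simp
    all_goals try ring
  rw [hPinv, hQinv, hA, hB, sl2_zpow y _ hdetA hCHA m, sl2_zpow y _ hdetB hCHB m]
  have hsm : (chebS ℂ m).eval y
      = y * (chebS ℂ (m-1)).eval y - (chebS ℂ (m-2)).eval y := by
    have h := chebS_eval_rec y (m - 1)
    rw [show m - 1 + 1 = m by ring, show m - 1 - 1 = m - 2 by ring] at h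
    exact h
  have hp := chebS_pell y (m - 1)
  rw [show m - 1 - 1 = m - 2 by ring] at hp
  rw [hsm]
  set a := (chebS ℂ (m-1)).eval y with ha
  set b := (chebS ℂ (m-2)).eval y with hb
  rw [Matrix.one_fin_two]
  simp [Matrix.trace, Matrix.diag, Matrix.mul_apply, Fin.sum_univ_two,
    Matrix.smul_apply, Matrix.sub_apply]
  linear_combination (2:ℂ) * hp
    + (-2*b^2 - 8*a*b - 2*a^2 + 6*y*a*b + 8*y*a^2 - 4*y^2*a^2
       + 4*(M*M⁻¹)*a^2 - 2*(M*M⁻¹)*y*a^2) * hMi
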